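/- For a complete r-partite graph K_{n_1,…,n_r} with n_1 ≤ ⋯ ≤ n_r of order at least k ≥ 2: Sd_k(K_{n_1,…,n_r}) = k if n_r ≥ k, and Sd_k(K_{n_1,…,n_r}) = k − 1 if n_r ≤ k − 1. -/

import Mathlib

open SimpleGraph

/-- The Steiner distance of a vertex set `S` in `G`: the minimum number of edges of a
connected subgraph of `G` whose vertex set contains `S`. -/
noncomputable def steinerDist {V : Type*} (G : SimpleGraph V) (S : Finset V) : ℕ :=
  sInf {n | ∃ H : G.Subgraph, H.Connected ∧ ↑S ⊆ H.verts ∧ H.edgeSet.ncard = n}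

/-- The Steiner `k`-diameter of `G`: the maximum Steiner distance over `k`-subsets. -/
noncomputable def steinerDiam {V : Type*} [Fintype V] [DecidableEq V]
    (G : SimpleGraph V) (k : ℕ) : ℕ :=
  Finset.sup (Finset.univ.filter fun S : Finset V => S.card = k) (steinerDist G)

/-- The Steiner `(k,k')`-eccentricity of a `k'`-subset `S'`. -/
noncomputable def steinerEcc {V : Type*} [Fintype V] [DecidableEq V]
    (G : SimpleGraph V) (k : ℕ) (S' : Finset V) : ℕ :=
  Finset.sup (Finset.univ.filter fun S : Finset V => S.card = k ∧ S' ⊆ S) (steinerDist G)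

/-- The Steiner `(k,k')`-radius of `G`. -/
noncomputable def steinerRadius {V : Type*} [Fintype V] [DecidableEq V]
    (G : SimpleGraph V) (k k' : ℕ) : ℕ :=
  sInf {n | ∃ S' : Finset V, S'.card = k' ∧ steinerEcc G k S' = n}

/-- The diameter of `G`: the maximum distance between two vertices. -/
noncomputable def gDiam {V : Type*} [Fintype V] (G : SimpleGraph V) : ℕ :=
  Finset.sup Finset.univ (fun p : V × V => G.dist p.1 p.2)

/-- The number of pendant vertices (leaves) of `G`. -/
noncomputable def leafCount {V : Type*} [Fintype V] [DecidableEq V]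
    (G : SimpleGraph V) [DecidableRel G.Adj] : ℕ :=
  (Finset.univ.filter fun v => G.degree v = 1).card

private lemma aux_exists_adj_dist_lt {V : Type*} {G : SimpleGraph V} {u v : V}
    (hne : v ≠ u) (hr : G.Reachable v u) :
    ∃ w, G.Adj v w ∧ G.dist w u < G.dist v u := by
  obtain ⟨p, hp⟩ := hr.exists_walk_length_eq_dist
  have hd : 0 < G.dist v u := hr.pos_dist_of_ne hne
  have hnil : ¬ p.Nil := by
    rw [SimpleGraph.Walk.nil_iff_length_eq]; omega
  refine ⟨p.getVert 1, p.adj_snd hnil, ?_⟩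
  have h1 : G.dist (p.getVert 1) u ≤ p.tail.length := G.dist_le p.tail
  have h2 : p.tail.length + 1 = p.length := SimpleGraph.Walk.length_tail_add_one hnil
  omega

private lemma aux_card_le_edges {V : Type*} [Fintype V] {G : SimpleGraph V}
    (hc : G.Connected) : Fintype.card V ≤ G.edgeSet.ncard + 1 := by
  classical
  obtain ⟨u⟩ := hc.nonempty
  have key : ∀ v : V, v ≠ u → ∃ w, G.Adj v w ∧ G.dist w u < G.dist v u :=
    fun v hv => aux_exists_adj_dist_lt hv (hc v u)
  choose! w hadj hlt using key
  have hmaps : ∀ v ∈ {v : V | v ≠ u}, s(v, w v) ∈ G.edgeSet := fun v hv => hadj v hv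
  have hinj : Set.InjOn (fun v => s(v, w v)) {v : V | v ≠ u} := by
    intro a ha b hb hab
    simp only [Sym2.eq, Sym2.rel_iff', Prod.mk.injEq, Prod.swap_prod_mk] at hab
    rcases hab with ⟨h1, _⟩ | ⟨h1, h2⟩
    · exact h1
    · exfalso
      have hab2 : G.dist (w a) u < G.dist a u := hlt a ha
      have hba2 : G.dist (w b) u < G.dist b u := hlt b hb
      rw [h2] at hab2
      rw [← h1] at hba2
      omega
  have h1 : ({v : V | v ≠ u}).ncard ≤ G.edgeSet.ncard :=
    Set.ncard_le_ncard_of_injOn _ hmaps hinj G.edgeSet.toFinite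
  have h2 : ({v : V | v ≠ u}).ncard = Fintype.card V - 1 := by
    have he : {v : V | v ≠ u} = Set.univ \ {u} := by ext x; simp
    rw [he, Set.ncard_diff (Set.subset_univ _), Set.ncard_univ, Set.ncard_singleton,
      Nat.card_eq_fintype_card]
  have h3 : 0 < Fintype.card V := Fintype.card_pos_iff.2 ⟨u⟩
  omega

private lemma aux_verts_le_edges {V : Type*} [Fintype V] {G : SimpleGraph V} {H : G.Subgraph}
    (hc : H.Connected) : H.verts.ncard ≤ H.edgeSet.ncard + 1 := by
  classical
  have h1 : Fintype.card H.verts ≤ H.coe.edgeSet.ncard + 1 := aux_card_le_edges hc.coe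
  have h2 : H.coe.edgeSet.ncard = H.edgeSet.ncard := by
    rw [← Subgraph.image_coe_edgeSet_coe]
    exact (Set.ncard_image_of_injective _ (Sym2.map.injective Subtype.val_injective)).symm
  have h3 : Fintype.card H.verts = H.verts.ncard := by
    rw [← Nat.card_eq_fintype_card, Nat.card_coe_set_eq]
  omega

private lemma aux_le_steinerDist {V : Type*} [Fintype V] {G : SimpleGraph V} {S : Finset V}
    (hne : {n | ∃ H : G.Subgraph, H.Connected ∧ ↑S ⊆ H.verts ∧ H.edgeSet.ncard = n}.Nonempty) :
    S.card - 1 ≤ steinerDist G S := by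
  apply le_csInf hne
  rintro m ⟨H, hc, hsub, rfl⟩
  have h1 := aux_verts_le_edges hc
  have h2 : (↑S : Set V).ncard ≤ H.verts.ncard := Set.ncard_le_ncard hsub H.verts.toFinite
  rw [Set.ncard_coe_finset] at h2
  omega

private def starSub {V : Type*} (G : SimpleGraph V) (S : Finset V) (w : V)
    (h : ∀ x ∈ S, G.Adj w x) : G.Subgraph where
  verts := insert w ↑S
  Adj a b := (a = w ∧ b ∈ S) ∨ (b = w ∧ a ∈ S)
  adj_sub := by rintro a b (⟨rfl, hb⟩ | ⟨rfl, ha⟩); exacts [h _ hb, (h _ ha).symm]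
  edge_vert := by
    rintro a b (⟨rfl, hb⟩ | ⟨rfl, ha⟩)
    exacts [Set.mem_insert _ _, Set.mem_insert_iff.2 (Or.inr ha)]
  symm := ⟨fun a b hab => hab.symm⟩

private lemma aux_star_mem {V : Type*} [Fintype V] {G : SimpleGraph V} {S : Finset V} {w : V}
    (h : ∀ x ∈ S, G.Adj w x) (_hS : S.Nonempty) :
    ∃ H : G.Subgraph, H.Connected ∧ ↑S ⊆ H.verts ∧ H.edgeSet.ncard = S.card := by
  have hw : w ∉ S := fun hw => G.irrefl (h w hw)
  refine ⟨starSub G S w h, ?_, ?_, ?_⟩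
  · rw [Subgraph.connected_iff]
    refine ⟨?_, ⟨w, Set.mem_insert _ _⟩⟩
    rw [Subgraph.preconnected_iff]
    have key : ∀ (c : V) (hc : c ∈ (starSub G S w h).verts),
        (starSub G S w h).coe.Reachable ⟨c, hc⟩ ⟨w, Set.mem_insert _ _⟩ := by
      rintro c hc
      rcases Set.mem_insert_iff.1 hc with rfl | hcS
      · exact Reachable.refl _
      · refine SimpleGraph.Adj.reachable ?_
        rw [Subgraph.coe_adj]
        exact Or.inr ⟨rfl, hcS⟩
    exact fun a b => (key a.1 a.2).trans (key b.1 b.2).symm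
  · exact fun x hx => Set.mem_insert_iff.2 (Or.inr hx)
  · have hE : (starSub G S w h).edgeSet = (fun x => s(w, x)) '' ↑S := by
      ext e
      induction e with
      | _ a b =>
        simp only [Subgraph.mem_edgeSet, Set.mem_image, Finset.mem_coe, starSub]
        constructor
        · rintro (⟨rfl, hb⟩ | ⟨rfl, ha⟩)
          · exact ⟨b, hb, rfl⟩
          · exact ⟨a, ha, Sym2.eq_swap⟩
        · rintro ⟨x, hx, hxe⟩
          rw [Sym2.eq_iff] at hxe
          rcases hxe with ⟨h1, h2⟩ | ⟨h1, h2⟩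
          · exact Or.inl ⟨h1.symm, h2 ▸ hx⟩
          · exact Or.inr ⟨h1.symm, h2 ▸ hx⟩
    rw [hE, Set.ncard_image_of_injOn, Set.ncard_coe_finset]
    intro x hx y hy hxy
    rw [Sym2.eq_iff] at hxy
    rcases hxy with ⟨_, h2⟩ | ⟨h1, h2⟩
    · exact h2
    · exact absurd (h1 ▸ hy) (by simpa using hw)

open Classical in
private noncomputable def dblSub {V : Type*} (G : SimpleGraph V) (S : Finset V) (u v : V)
    (huv : G.Adj u v) (hu : u ∈ S) (hv : v ∈ S)
    (hadj : ∀ x ∈ S, x ≠ u → x ≠ v → G.Adj u x ∨ G.Adj v x) : G.Subgraph where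
  verts := ↑S
  Adj a b := s(a, b) = s(u, v) ∨
    ∃ x ∈ S, x ≠ u ∧ x ≠ v ∧ s(a, b) = (if G.Adj u x then s(u, x) else s(v, x))
  adj_sub := by
    rintro a b (hab | ⟨x, hx, hxu, hxv, hab⟩)
    · rw [Sym2.eq_iff] at hab
      rcases hab with ⟨rfl, rfl⟩ | ⟨rfl, rfl⟩
      exacts [huv, huv.symm]
    · by_cases hux : G.Adj u x
      · rw [if_pos hux, Sym2.eq_iff] at hab
        rcases hab with ⟨rfl, rfl⟩ | ⟨rfl, rfl⟩
        exacts [hux, hux.symm]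
      · have hvx : G.Adj v x := ((hadj x hx hxu hxv).resolve_left hux)
        rw [if_neg hux, Sym2.eq_iff] at hab
        rcases hab with ⟨rfl, rfl⟩ | ⟨rfl, rfl⟩
        exacts [hvx, hvx.symm]
  edge_vert := by
    rintro a b (hab | ⟨x, hx, hxu, hxv, hab⟩)
    · rw [Sym2.eq_iff] at hab
      rcases hab with ⟨rfl, rfl⟩ | ⟨rfl, rfl⟩
      exacts [hu, hv]
    · by_cases hux : G.Adj u x
      · rw [if_pos hux, Sym2.eq_iff] at hab
        rcases hab with ⟨rfl, rfl⟩ | ⟨rfl, rfl⟩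
        exacts [hu, hx]
      · rw [if_neg hux, Sym2.eq_iff] at hab
        rcases hab with ⟨rfl, rfl⟩ | ⟨rfl, rfl⟩
        exacts [hv, hx]
  symm := by
    refine ⟨?_⟩
    rintro a b hab
    rwa [Sym2.eq_swap (a := b)]

open Classical in
private lemma aux_dbl_mem {V : Type*} [Fintype V] {G : SimpleGraph V} {S : Finset V}
    {u v : V} (huv : G.Adj u v) (hu : u ∈ S) (hv : v ∈ S)
    (hadj : ∀ x ∈ S, x ≠ u → x ≠ v → G.Adj u x ∨ G.Adj v x) :
    ∃ H : G.Subgraph, H.Connected ∧ ↑S ⊆ H.verts ∧ H.edgeSet.ncard = S.card - 1 := by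
  classical
  set f : V → Sym2 V := fun x => if G.Adj u x then s(u, x) else s(v, x) with hf
  have hune : u ≠ v := huv.ne
  refine ⟨dblSub G S u v huv hu hv hadj, ?_, ?_, ?_⟩
  · rw [Subgraph.connected_iff]
    refine ⟨?_, ⟨u, hu⟩⟩
    rw [Subgraph.preconnected_iff]
    have hadjuv : (dblSub G S u v huv hu hv hadj).Adj v u := by
      exact Or.inl (Sym2.eq_swap)
    have key : ∀ (c : V) (hc : c ∈ (dblSub G S u v huv hu hv hadj).verts),
        (dblSub G S u v huv hu hv hadj).coe.Reachable ⟨c, hc⟩ ⟨u, hu⟩ := by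
      rintro c hc
      have hcS : c ∈ S := hc
      by_cases hcu : c = u
      · subst hcu; exact Reachable.refl _
      · by_cases hcv : c = v
        · subst hcv
          refine SimpleGraph.Adj.reachable ?_
          rw [Subgraph.coe_adj]
          exact hadjuv
        · by_cases hux : G.Adj u c
          · refine SimpleGraph.Adj.reachable ?_
            rw [Subgraph.coe_adj]
            refine Or.inr ⟨c, hcS, hcu, hcv, ?_⟩
            rw [if_pos hux, Sym2.eq_swap]
          · have h1 : (dblSub G S u v huv hu hv hadj).coe.Adj ⟨c, hc⟩ ⟨v, hv⟩ := by
              rw [Subgraph.coe_adj]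
              refine Or.inr ⟨c, hcS, hcu, hcv, ?_⟩
              rw [if_neg hux, Sym2.eq_swap]
            have h2 : (dblSub G S u v huv hu hv hadj).coe.Adj ⟨v, hv⟩ ⟨u, hu⟩ := by
              rw [Subgraph.coe_adj]; exact hadjuv
            exact (h1.reachable).trans h2.reachable
    exact fun a b => (key a.1 a.2).trans (key b.1 b.2).symm
  · exact fun x hx => hx
  · have hE : (dblSub G S u v huv hu hv hadj).edgeSet
        = insert s(u, v) (f '' (↑S \ {u, v})) := by
      ext e
      induction e with
      | _ a b =>
        simp only [Subgraph.mem_edgeSet, dblSub, Set.mem_insert_iff, Set.mem_image,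
          Set.mem_diff, Finset.mem_coe, Set.mem_singleton_iff, hf]
        constructor
        · rintro (hab | ⟨x, hx, hxu, hxv, hab⟩)
          · exact Or.inl hab
          · exact Or.inr ⟨x, ⟨hx, by simp [hxu, hxv]⟩, hab.symm⟩
        · rintro (hab | ⟨x, ⟨hx, hx2⟩, hab⟩)
          · exact Or.inl hab
          · simp only [Set.mem_insert_iff, Set.mem_singleton_iff, not_or] at hx2
            exact Or.inr ⟨x, hx, hx2.1, hx2.2, hab.symm⟩
    have hsubs : ({u, v} : Finset V) ⊆ S := by
      intro x hx
      rcases Finset.mem_insert.1 hx with rfl | hx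
      · exact hu
      · rw [Finset.mem_singleton] at hx; subst hx; exact hv
    have hcoe : (↑S \ {u, v} : Set V) = ↑(S \ {u, v} : Finset V) := by
      rw [Finset.coe_sdiff]; simp
    have hnm : s(u, v) ∉ f '' (↑S \ {u, v}) := by
      rintro ⟨x, ⟨hx1, hx2⟩, hfx⟩
      simp only [Set.mem_insert_iff, Set.mem_singleton_iff, not_or] at hx2
      by_cases hux : G.Adj u x
      · rw [hf] at hfx; simp only [if_pos hux, Sym2.eq_iff] at hfx
        rcases hfx with ⟨_, h2⟩ | ⟨h1, _⟩
        exacts [hx2.2 h2, hune h1]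
      · rw [hf] at hfx; simp only [if_neg hux, Sym2.eq_iff] at hfx
        rcases hfx with ⟨h1, _⟩ | ⟨_, h2⟩
        exacts [hune h1.symm, hx2.1 h2]
    have hinj : Set.InjOn f (↑S \ {u, v}) := by
      rintro x ⟨hx1, hx2⟩ y ⟨hy1, hy2⟩ hxy
      simp only [Set.mem_insert_iff, Set.mem_singleton_iff, not_or] at hx2 hy2
      rw [hf] at hxy
      by_cases hux : G.Adj u x <;> by_cases huy : G.Adj u y <;>
        simp only [if_pos, if_neg, hux, huy, if_true, if_false, Sym2.eq_iff] at hxy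
      · rcases hxy with ⟨_, h2⟩ | ⟨h1, _⟩
        exacts [h2, absurd h1.symm hy2.1]
      · rcases hxy with ⟨h1, _⟩ | ⟨_, h2⟩
        exacts [absurd h1 hune, absurd h2 hx2.2]
      · rcases hxy with ⟨h1, _⟩ | ⟨h1, _⟩
        exacts [absurd h1.symm hune, absurd h1.symm hy2.2]
      · rcases hxy with ⟨_, h2⟩ | ⟨h1, _⟩
        exacts [h2, absurd h1.symm hy2.2]
    have hcard2 : ({u, v} : Finset V).card = 2 := by
      rw [Finset.card_insert_of_notMem (by simpa using hune), Finset.card_singleton]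
    rw [hE, Set.ncard_insert_of_notMem hnm (Set.toFinite _), Set.ncard_image_of_injOn hinj,
      hcoe, Set.ncard_coe_finset, Finset.card_sdiff_of_subset hsubs, hcard2]
    have : 2 ≤ S.card := Finset.card_le_card hsubs |>.trans_eq' hcard2
    omega

private lemma aux_sd_two {V : Type*} [Fintype V] {G : SimpleGraph V} {S : Finset V}
    {u v : V} (huv : G.Adj u v) (hu : u ∈ S) (hv : v ∈ S)
    (hadj : ∀ x ∈ S, x ≠ u → x ≠ v → G.Adj u x ∨ G.Adj v x) :
    steinerDist G S = S.card - 1 := by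
  obtain ⟨H, h1, h2, h3⟩ := aux_dbl_mem huv hu hv hadj
  have hmem : S.card - 1 ∈
      {n | ∃ H : G.Subgraph, H.Connected ∧ ↑S ⊆ H.verts ∧ H.edgeSet.ncard = n} := ⟨H, h1, h2, h3⟩
  exact le_antisymm (Nat.sInf_le hmem) (aux_le_steinerDist ⟨_, hmem⟩)

private lemma aux_sd_one {V : Type*} [Fintype V] {G : SimpleGraph V} {S : Finset V} {w : V}
    (h : ∀ x ∈ S, G.Adj w x) (hS : 2 ≤ S.card)
    (hind : ∀ x ∈ S, ∀ y ∈ S, ¬ G.Adj x y) :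
    steinerDist G S = S.card := by
  obtain ⟨H0, h1, h2, h3⟩ := aux_star_mem h (Finset.card_pos.1 (by omega))
  have hmem : S.card ∈
      {n | ∃ H : G.Subgraph, H.Connected ∧ ↑S ⊆ H.verts ∧ H.edgeSet.ncard = n} := ⟨H0, h1, h2, h3⟩
  refine le_antisymm (Nat.sInf_le hmem) (le_csInf ⟨_, hmem⟩ ?_)
  rintro m ⟨H, hc, hsub, rfl⟩
  have hne : (↑S : Set V) ≠ H.verts := by
    intro heq
    obtain ⟨x, hx, y, hy, hxy⟩ := Finset.one_lt_card.1 hS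
    have hxv : x ∈ H.verts := hsub hx
    have hyv : y ∈ H.verts := hsub hy
    obtain ⟨p⟩ := hc.coe ⟨x, hxv⟩ ⟨y, hyv⟩
    have hnil : ¬ p.Nil := SimpleGraph.Walk.not_nil_of_ne (by simp [hxy])
    have hadj1 : H.coe.Adj ⟨x, hxv⟩ (p.getVert 1) := p.adj_snd hnil
    have hadj2 : H.Adj x (p.getVert 1).1 := by
      rw [Subgraph.coe_adj] at hadj1; exact hadj1
    have hmem2 : ((p.getVert 1 : H.verts) : V) ∈ S := by
      exact (Set.ext_iff.1 heq _).2 (p.getVert 1).2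
    exact hind x hx _ hmem2 (H.adj_sub hadj2)
  have hss : (↑S : Set V) ⊂ H.verts := lt_of_le_of_ne hsub hne
  have hlt := Set.ncard_lt_ncard hss H.verts.toFinite
  rw [Set.ncard_coe_finset] at hlt
  have hve := aux_verts_le_edges hc
  omega

theorem stmt9 (r k : ℕ) (hr : 2 ≤ r) (n : Fin r → ℕ) (hmono : Monotone n)
    (hpos : ∀ i, 0 < n i) (hk : 2 ≤ k) (horder : k ≤ ∑ i, n i) :
    (k ≤ n ⟨r - 1, by omega⟩ →
      steinerDiam (completeMultipartiteGraph (fun i : Fin r => Fin (n i))) k = k) ∧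
    (n ⟨r - 1, by omega⟩ ≤ k - 1 →
      steinerDiam (completeMultipartiteGraph (fun i : Fin r => Fin (n i))) k = k - 1) := by
  classical
  set p : Fin r := ⟨r - 1, by omega⟩ with hpdef
  set G := completeMultipartiteGraph (fun i : Fin r => Fin (n i)) with hGdef
  have hG : ∀ a b : (Σ i : Fin r, Fin (n i)), G.Adj a b ↔ a.1 ≠ b.1 := fun a b => Iff.rfl
  have hle_p : ∀ i : Fin r, n i ≤ n p := by
    intro i
    apply hmono
    rw [Fin.le_def]
    have := i.2
    simp only [hpdef]
    omega
  have hone_val : ∀ S : Finset (Σ i : Fin r, Fin (n i)), S.card = k →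
      (∀ x ∈ S, ∀ y ∈ S, x.1 = y.1) → steinerDist G S = k := by
    intro S hSc hone
    obtain ⟨x0, hx0⟩ : S.Nonempty := Finset.card_pos.1 (by omega)
    obtain ⟨j, hj⟩ := Fintype.exists_ne_of_one_lt_card (by simp; omega) x0.1
    set w : (Σ i : Fin r, Fin (n i)) := ⟨j, ⟨0, hpos j⟩⟩ with hwdef
    have hwadj : ∀ x ∈ S, G.Adj w x := by
      intro x hx
      have hx1 : x.1 = x0.1 := hone x hx x0 hx0
      refine (hG w x).2 ?_
      rw [hx1]
      exact hj
    rw [aux_sd_one hwadj (by omega) ?_]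
    · exact hSc
    · exact fun x hx y hy hh => (hG x y).1 hh (hone x hx y hy)
  have htwo_val : ∀ S : Finset (Σ i : Fin r, Fin (n i)), S.card = k →
      (¬ ∀ x ∈ S, ∀ y ∈ S, x.1 = y.1) → steinerDist G S = k - 1 := by
    intro S hSc hmix
    push_neg at hmix
    obtain ⟨u, hu, v, hv, huv⟩ := hmix
    have hadjuv : G.Adj u v := (hG u v).2 huv
    rw [aux_sd_two hadjuv hu hv ?_]
    · rw [hSc]
    · intro x hx hxu hxv
      by_cases h1 : x.1 = u.1
      · refine Or.inr ((hG v x).2 ?_)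
        intro hh
        exact huv (h1 ▸ hh.symm)
      · exact Or.inl ((hG u x).2 fun hh => h1 hh.symm)
  constructor
  · intro hkn
    apply le_antisymm
    · apply Finset.sup_le
      intro S hS
      rw [Finset.mem_filter] at hS
      by_cases hone : ∀ x ∈ S, ∀ y ∈ S, x.1 = y.1
      · exact (hone_val S hS.2 hone).le
      · rw [htwo_val S hS.2 hone]; omega
    · set f : Fin k → (Σ i : Fin r, Fin (n i)) :=
        fun a => ⟨p, ⟨a.1, lt_of_lt_of_le a.2 hkn⟩⟩ with hfdef
      have hfinj : Function.Injective f := by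
        intro a b hab
        have h2 := congrArg (fun x : Σ i : Fin r, Fin (n i) => (x.2 : ℕ)) hab
        simpa [hfdef, Fin.ext_iff] using h2
      set S := Finset.image f Finset.univ with hSdef
      have hcard : S.card = k := by
        rw [hSdef, Finset.card_image_of_injective _ hfinj, Finset.card_univ, Fintype.card_fin]
      have hmemf : S ∈ Finset.univ.filter (fun T : Finset (Σ i : Fin r, Fin (n i)) => T.card = k) := by
        simp [hcard]
      refine le_trans ?_ (Finset.le_sup (f := steinerDist G) hmemf)
      rw [hone_val S hcard ?_]
      intro x hx y hy
      rw [hSdef, Finset.mem_image] at hx hy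
      obtain ⟨a, _, rfl⟩ := hx
      obtain ⟨b, _, rfl⟩ := hy
      rfl
  · intro hkn
    have hval : ∀ S ∈ Finset.univ.filter
        (fun T : Finset (Σ i : Fin r, Fin (n i)) => T.card = k),
        steinerDist G S = k - 1 := by
      intro S hS
      rw [Finset.mem_filter] at hS
      refine htwo_val S hS.2 ?_
      intro hone
      obtain ⟨x0, hx0⟩ : S.Nonempty := Finset.card_pos.1 (by omega)
      have hinj2 : S.card ≤ (Finset.range (n x0.1)).card := by
        apply Finset.card_le_card_of_injOn (fun x => (x.2 : ℕ))
        · intro x hx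
          rw [Finset.mem_coe, Finset.mem_range]
          have hx1 : x.1 = x0.1 := hone x hx x0 hx0
          rw [← hx1]
          exact x.2.2
        · rintro ⟨xi, xv⟩ hx ⟨yi, yv⟩ hy hxy
          have h1 : xi = x0.1 := hone _ hx _ hx0
          have h2 : yi = x0.1 := hone _ hy _ hx0
          obtain rfl : xi = yi := h1.trans h2.symm
          simp only at hxy
          exact congrArg _ (Fin.val_injective hxy)
      rw [Finset.card_range] at hinj2
      have h3 := hle_p x0.1
      omega
    have hcardV : k ≤ (Finset.univ : Finset (Σ i : Fin r, Fin (n i))).card := by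
      rw [Finset.card_univ, Fintype.card_sigma]
      simpa [Fintype.card_fin] using horder
    obtain ⟨S0, hS0sub, hS0⟩ := Finset.exists_subset_card_eq hcardV
    have hm : S0 ∈ Finset.univ.filter
        (fun T : Finset (Σ i : Fin r, Fin (n i)) => T.card = k) := by simp [hS0]
    apply le_antisymm
    · exact Finset.sup_le fun S hS => (hval S hS).le
    · calc k - 1 = steinerDist G S0 := (hval S0 hm).symm
        _ ≤ _ := Finset.le_sup (f := steinerDist G) hm
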